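/- The IF neuron with soft reset fails Δ-short control: for any positive integer Δ, if the inputs X_{t-Δ+1}, …, X_t are all nonnegative and strictly less than V_th/Δ, and if H_{t-Δ} > (Δ+1)·V_th − (X_{t-Δ+1} + ⋯ + X_t), then H_s ≥ V_th for all s with t−Δ < s ≤ t; in particular H_t ≥ V_th. -/

import Mathlib

theorem stmt_6 (Vth : ℝ) (hVth : 0 < Vth) (Δ : ℕ) (hΔ : 0 < Δ)
    (X H : ℕ → ℝ)
    (hrec : ∀ t, H (t + 1) = H t - Vth * (if Vth ≤ H t then (1 : ℝ) else 0) + X (t + 1))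
    (s : ℕ)
    (hin : ∀ i, 1 ≤ i → i ≤ Δ → 0 ≤ X (s + i) ∧ X (s + i) < Vth / Δ)
    (hbig : H s > ((Δ : ℝ) + 1) * Vth - ∑ i ∈ Finset.Icc 1 Δ, X (s + i)) :
    ∀ i, 1 ≤ i → i ≤ Δ → Vth ≤ H (s + i) := by
  -- step lemma: H (t+1) ≥ H t - Vth + X (t+1)
  have hstep : ∀ t, H t - Vth + X (t + 1) ≤ H (t + 1) := by
    intro t
    rw [hrec t]
    have : Vth * (if Vth ≤ H t then (1 : ℝ) else 0) ≤ Vth := by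
      split <;> nlinarith
    linarith
  -- main lower bound by induction
  have key : ∀ i, H s - i * Vth + ∑ j ∈ Finset.Icc 1 i, X (s + j) ≤ H (s + i) := by
    intro i
    induction i with
    | zero => simp
    | succ n ih =>
      have h1 := hstep (s + n)
      have hsum : ∑ j ∈ Finset.Icc 1 (n + 1), X (s + j)
          = (∑ j ∈ Finset.Icc 1 n, X (s + j)) + X (s + (n + 1)) := by
        rw [Finset.sum_Icc_succ_top (Nat.succ_le_succ (Nat.zero_le n))]
      have : (s + n) + 1 = s + (n + 1) := by omega
      rw [this] at h1
      rw [hsum]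
      push_cast
      have : (↑n + 1 : ℝ) * Vth = ↑n * Vth + Vth := by ring
      linarith
  intro i hi1 hiΔ
  have hkey := key i
  -- split the big sum
  have hsplit : ∑ j ∈ Finset.Icc 1 Δ, X (s + j)
      = (∑ j ∈ Finset.Icc 1 i, X (s + j)) + ∑ j ∈ Finset.Ioc i Δ, X (s + j) := by
    rw [show Finset.Icc 1 i = Finset.Ioc 0 i from Finset.Icc_add_one_left_eq_Ioc 0 i, show Finset.Icc 1 Δ = Finset.Ioc 0 Δ from Finset.Icc_add_one_left_eq_Ioc 0 Δ]
    exact (Finset.sum_Ioc_consecutive _ (Nat.zero_le i) hiΔ).symm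
  -- bound tail sum
  have htail : ∑ j ∈ Finset.Ioc i Δ, X (s + j) ≤ (Δ - i : ℕ) * (Vth / Δ) := by
    have := Finset.sum_le_card_nsmul (Finset.Ioc i Δ) (fun j => X (s + j)) (Vth / Δ)
      (fun j hj => by
        simp only [Finset.mem_Ioc] at hj
        exact le_of_lt (hin j (by omega) hj.2).2)
    simpa [Nat.card_Ioc, nsmul_eq_mul] using this
  have hcast : ((Δ - i : ℕ) : ℝ) = (Δ : ℝ) - i := by
    rw [Nat.cast_sub hiΔ]
  rw [hcast] at htail
  have hΔR : (1 : ℝ) ≤ Δ := by exact_mod_cast hΔ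
  have hdiv : Vth / Δ ≤ Vth := by
    rw [div_le_iff₀ (by linarith)]
    nlinarith
  have hiR : (i : ℝ) ≤ Δ := by exact_mod_cast hiΔ
  have hfin : ((Δ : ℝ) - i) * (Vth / Δ) ≤ ((Δ : ℝ) - i) * Vth := by
    apply mul_le_mul_of_nonneg_left hdiv (by linarith)
  nlinarith [hkey, hbig, hsplit, htail, hfin]
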